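/- (Remark 3.3: comparison of convergence factors.) Let J and J' be nonempty subsets of {1,…,n}. Then 1 − (‖A_J‖_F²/σ_max(A_J)²) · (1/2)·(‖A‖_F²/(‖A‖_F² − ‖A_{J'}‖_F²) + 1) · σ_min(A)²/‖A‖_F² ≤ 1 − (1/2)·(‖A‖_F²/(‖A‖_F² − min_{1≤j≤n}‖A_(j)‖₂²) + 1) · σ_min(A)²/‖A‖_F², provided J' is a proper subset of {1,…,n} (so that ‖A‖_F² − ‖A_{J'}‖_F² > 0). That is, the GBGS convergence factor with θ = 1/2 is at most the GRCD convergence factor. -/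

import Mathlib

noncomputable section
open Matrix

/-- Squared Euclidean norm `‖v‖₂²` of a vector. -/
def norm2 {ι : Type*} [Fintype ι] (v : ι → ℝ) : ℝ := ∑ i, (v i) ^ 2

/-- Squared Frobenius norm `‖A‖_F²` of a matrix. -/
def frob2 {ι κ : Type*} [Fintype ι] [Fintype κ] (A : Matrix ι κ ℝ) : ℝ :=
  ∑ i, ∑ j, (A i j) ^ 2

/-- Squared largest singular value `σ_max(B)²`, i.e. the largest eigenvalue of `Bᵀ * B`. -/
def sigmaMaxSq {ι κ : Type*} [Fintype ι] [Fintype κ] [DecidableEq κ]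
    (B : Matrix ι κ ℝ) : ℝ :=
  sSup (Set.range (show (Bᵀ * B).IsHermitian by
    rw [← Matrix.conjTranspose_eq_transpose_of_trivial]
    exact Matrix.isHermitian_conjTranspose_mul_self B).eigenvalues)

/-- Squared smallest singular value `σ_min(B)²`, i.e. the smallest eigenvalue of `Bᵀ * B`. -/
def sigmaMinSq {ι κ : Type*} [Fintype ι] [Fintype κ] [DecidableEq κ]
    (B : Matrix ι κ ℝ) : ℝ :=
  sInf (Set.range (show (Bᵀ * B).IsHermitian by
    rw [← Matrix.conjTranspose_eq_transpose_of_trivial]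
    exact Matrix.isHermitian_conjTranspose_mul_self B).eigenvalues)

/-- Squared Euclidean norm `‖A_(j)‖₂²` of the `j`-th column of `A`. -/
def col2 {m n : ℕ} (A : Matrix (Fin m) (Fin n) ℝ) (j : Fin n) : ℝ := ∑ i, (A i j) ^ 2

/-- `A` has full column rank: its columns are linearly independent. -/
def FullColRank {m n : ℕ} (A : Matrix (Fin m) (Fin n) ℝ) : Prop :=
  LinearIndependent ℝ fun j : Fin n => (fun i => A i j : Fin m → ℝ)

/-- `max_{1 ≤ j ≤ n} |A_(j)ᵀ r|² / ‖A_(j)‖₂²`. -/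
def maxRatio {m n : ℕ} (A : Matrix (Fin m) (Fin n) ℝ) (r : Fin m → ℝ) : ℝ :=
  ⨆ j : Fin n, ((Aᵀ *ᵥ r) j) ^ 2 / col2 A j

/-- The greedy parameter
`ε = (θ/‖Aᵀr‖₂²)·max_j |A_(j)ᵀ r|²/‖A_(j)‖₂² + (1−θ)/‖A‖_F²`. -/
def eps {m n : ℕ} (A : Matrix (Fin m) (Fin n) ℝ) (r : Fin m → ℝ) (θ : ℝ) : ℝ :=
  θ / norm2 (Aᵀ *ᵥ r) * maxRatio A r + (1 - θ) / frob2 A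

open Classical in
/-- The greedy index set `J = { j : |A_(j)ᵀ r|² ≥ ε ‖Aᵀr‖₂² ‖A_(j)‖₂² }`. -/
def greedySet {m n : ℕ} (A : Matrix (Fin m) (Fin n) ℝ) (r : Fin m → ℝ) (θ : ℝ) :
    Finset (Fin n) :=
  Finset.univ.filter fun j =>
    eps A r θ * norm2 (Aᵀ *ᵥ r) * col2 A j ≤ ((Aᵀ *ᵥ r) j) ^ 2

/-- The column submatrix `A_J` of `A`, with columns indexed by `J`. -/
def subCols {m n : ℕ} (A : Matrix (Fin m) (Fin n) ℝ) (J : Finset (Fin n)) :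
    Matrix (Fin m) {j // j ∈ J} ℝ :=
  A.submatrix id fun j => (j : Fin n)

/-- The submatrix `I_J` of the `n × n` identity with columns indexed by `J`. -/
def subId {n : ℕ} (J : Finset (Fin n)) : Matrix (Fin n) {j // j ∈ J} ℝ :=
  (1 : Matrix (Fin n) (Fin n) ℝ).submatrix id fun j => (j : Fin n)

/-- Moore–Penrose pseudoinverse of a full-column-rank matrix: `B† = (BᵀB)⁻¹Bᵀ`. -/
def pinv {ι κ : Type*} [Fintype ι] [Fintype κ] [DecidableEq κ] (B : Matrix ι κ ℝ) :
    Matrix κ ι ℝ :=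
  (Bᵀ * B)⁻¹ * Bᵀ

/-- The matrix `Ã_J` whose columns are the normalized columns `A_(j)/‖A_(j)‖₂`, `j ∈ J`. -/
def tildeA {m n : ℕ} (A : Matrix (Fin m) (Fin n) ℝ) (J : Finset (Fin n)) :
    Matrix (Fin m) {j // j ∈ J} ℝ :=
  Matrix.of fun i j => A i (j : Fin n) / Real.sqrt (col2 A (j : Fin n))

/-- The matrix `Ĩ_J` whose columns are `e_j/‖A_(j)‖₂`, `j ∈ J`. -/
def tildeI {m n : ℕ} (A : Matrix (Fin m) (Fin n) ℝ) (J : Finset (Fin n)) :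
    Matrix (Fin n) {j // j ∈ J} ℝ :=
  Matrix.of fun i j => (if i = (j : Fin n) then 1 else 0) / Real.sqrt (col2 A (j : Fin n))


section helpers
open Finset in
lemma trace_eq_sum_eig {k : Type*} [Fintype k] [DecidableEq k] {M : Matrix k k ℝ}
    (h : M.IsHermitian) : M.trace = ∑ i, h.eigenvalues i := by
  rw [h.trace_eq_sum_eigenvalues]
  simp

lemma trace_conj_eq_frob2 {ι κ : Type*} [Fintype ι] [Fintype κ] (B : Matrix ι κ ℝ) :
    (Bᴴ * B).trace = frob2 B := by
  simp only [Matrix.trace, Matrix.diag, Matrix.mul_apply, Matrix.conjTranspose_apply,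
    star_trivial, frob2, ← sq]
  exact Finset.sum_comm ..
end helpers

/-- Remark 3.3: the GBGS convergence factor with `θ = 1/2` is at most
the GRCD convergence factor. -/
theorem stmt13 {m n : ℕ} (A : Matrix (Fin m) (Fin n) ℝ) (hA : FullColRank A)
    (J J' : Finset (Fin n)) (hJ : J.Nonempty) (hJ'ne : J'.Nonempty)
    (hJ' : J' ≠ Finset.univ) :
    1 - frob2 (subCols A J) / sigmaMaxSq (subCols A J) *
        (1 / 2 * (frob2 A / (frob2 A - frob2 (subCols A J')) + 1)) *
        (sigmaMinSq A / frob2 A) ≤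
      1 - 1 / 2 * (frob2 A / (frob2 A - ⨅ j : Fin n, col2 A j) + 1) *
        (sigmaMinSq A / frob2 A) := by
  classical
  obtain ⟨j0, hj0⟩ := hJ'ne
  have hFn : Nonempty (Fin n) := ⟨j0⟩
  -- columns are nonzero
  have hcol : ∀ j, 0 < col2 A j := by
    intro j
    have hne : (fun i => A i j : Fin m → ℝ) ≠ 0 := hA.ne_zero j
    obtain ⟨i, hi⟩ := Function.ne_iff.mp hne
    have hi' : A i j ≠ 0 := hi
    refine Finset.sum_pos' (fun i _ => sq_nonneg _) ⟨i, Finset.mem_univ i, ?_⟩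
    positivity
  have hfrobsub : ∀ (K : Finset (Fin n)), frob2 (subCols A K) = ∑ j ∈ K, col2 A j := by
    intro K
    rw [frob2, Finset.sum_comm]
    rw [← Finset.sum_coe_sort K (col2 A)]
    rfl
  have hfrobA : frob2 A = ∑ j, col2 A j := by
    rw [frob2, Finset.sum_comm]; rfl
  have hApos : 0 < frob2 A := by
    rw [hfrobA]
    exact Finset.sum_pos (fun j _ => hcol j) Finset.univ_nonempty
  -- frob2 J' < frob2 A
  have hJ'lt : frob2 (subCols A J') < frob2 A := by
    rw [hfrobsub, hfrobA, ← sub_pos, ← Finset.sum_sdiff_eq_sub (Finset.subset_univ J')]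
    obtain ⟨j1, hj1⟩ := not_forall.mp (fun h => hJ' (Finset.eq_univ_iff_forall.mpr h))
    exact Finset.sum_pos' (fun j _ => (hcol j).le)
      ⟨j1, Finset.mem_sdiff.mpr ⟨Finset.mem_univ j1, hj1⟩, hcol j1⟩
  -- infimum of col2 is at most frob2 J'
  have hmin_le : (⨅ j : Fin n, col2 A j) ≤ frob2 (subCols A J') := by
    have h1 : (⨅ j : Fin n, col2 A j) ≤ col2 A j0 :=
      ciInf_le (Finite.bddBelow_range _) j0
    refine h1.trans ?_
    rw [hfrobsub]
    exact Finset.single_le_sum (fun j _ => (hcol j).le) hj0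
  -- eigenvalue facts for subCols A J
  set B := subCols A J with hB
  have hH : (Bᵀ * B).IsHermitian := by
    rw [← Matrix.conjTranspose_eq_transpose_of_trivial]
    exact Matrix.isHermitian_conjTranspose_mul_self B
  have heig : ∀ i, 0 ≤ hH.eigenvalues i := fun i =>
    Matrix.eigenvalues_conjTranspose_mul_self_nonneg B i
  have hJne : Nonempty {j // j ∈ J} := ⟨⟨hJ.choose, hJ.choose_spec⟩⟩
  have htr : frob2 B = ∑ i, hH.eigenvalues i := by
    rw [← trace_conj_eq_frob2]; exact trace_eq_sum_eig hH
  have hBpos : 0 < frob2 B := by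
    rw [hB, hfrobsub]
    exact Finset.sum_pos (fun j _ => hcol j) hJ
  have hmax_le : sigmaMaxSq B ≤ frob2 B := by
    refine csSup_le (Set.range_nonempty _) ?_
    rintro x ⟨i, rfl⟩
    rw [htr]
    exact Finset.single_le_sum (fun i _ => heig i) (Finset.mem_univ i)
  have hmax_pos : 0 < sigmaMaxSq B := by
    obtain ⟨i, hi⟩ : ∃ i, 0 < hH.eigenvalues i := by
      by_contra hcon
      push_neg at hcon
      have : frob2 B ≤ 0 := htr.le.trans (Finset.sum_nonpos fun i _ => hcon i)
      linarith
    exact hi.trans_le (le_csSup (Set.Finite.bddAbove (Set.finite_range _)) ⟨i, rfl⟩)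
  -- sigmaMinSq A nonneg
  have hsmin : 0 ≤ sigmaMinSq A := by
    apply Real.sInf_nonneg
    rintro x ⟨i, rfl⟩
    exact Matrix.eigenvalues_conjTranspose_mul_self_nonneg A i
  have hS : 0 ≤ sigmaMinSq A / frob2 A := div_nonneg hsmin hApos.le
  have hR : 1 ≤ frob2 B / sigmaMaxSq B := (one_le_div hmax_pos).mpr hmax_le
  have hq : frob2 A / (frob2 A - (⨅ j : Fin n, col2 A j)) ≤
      frob2 A / (frob2 A - frob2 (subCols A J')) := by
    gcongr
  have hq0 : 0 ≤ frob2 A / (frob2 A - (⨅ j : Fin n, col2 A j)) := by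
    apply div_nonneg hApos.le
    have := hmin_le.trans hJ'lt.le
    linarith
  apply sub_le_sub_left
  set q := frob2 A / (frob2 A - (⨅ j : Fin n, col2 A j))
  set q' := frob2 A / (frob2 A - frob2 (subCols A J'))
  set R := frob2 B / sigmaMaxSq B
  set S := sigmaMinSq A / frob2 A
  nlinarith [mul_le_mul_of_nonneg_right hq hS,
    mul_nonneg (mul_nonneg (by linarith : (0:ℝ) ≤ R - 1)
      (by linarith : (0:ℝ) ≤ 1 / 2 * (q' + 1))) hS]
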